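/- Let H̃ : ℝ^M × ℝ^M → ℝ be symmetric and ∇̄H̃ a polarized discrete gradient of H̃, i.e., H̃(v,w) - H̃(u,v) = (1/2)(w-u)ᵀ ∇̄H̃(u,v,w) for all u,v,w. If S is a skew-symmetric M×M real matrix and the sequence (uⁿ) satisfies (u^{n+2} - uⁿ)/(2Δt) = S ∇̄H̃(uⁿ, u^{n+1}, u^{n+2}) for all n ≥ 0, then H̃(uⁿ, u^{n+1}) = H̃(u⁰, u¹) for all n ≥ 0. -/
import Mathlib


open Matrix

lemma skew_quad {M : ℕ} (S : Matrix (Fin M) (Fin M) ℝ) (hS : Sᵀ = -S)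
    (x : Fin M → ℝ) : x ⬝ᵥ S.mulVec x = 0 := by
  have h2 : S.vecMul x = Sᵀ.mulVec x := (Matrix.mulVec_transpose S x).symm
  have h3 : x ⬝ᵥ S.mulVec x = - (x ⬝ᵥ S.mulVec x) := by
    conv_lhs => rw [Matrix.dotProduct_mulVec, h2, hS, Matrix.neg_mulVec,
      neg_dotProduct, dotProduct_comm]
  linarith

/-- The two-step polarized discrete gradient scheme preserves the polarized energy. -/
theorem stmt4 (M : ℕ) (hM : 1 ≤ M) (Δt : ℝ) (hΔt : 0 < Δt)
    (S : Matrix (Fin M) (Fin M) ℝ) (hS : Sᵀ = -S)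
    (Ht : (Fin M → ℝ) → (Fin M → ℝ) → ℝ)
    (hsymm : ∀ u v : Fin M → ℝ, Ht u v = Ht v u)
    (dg : (Fin M → ℝ) → (Fin M → ℝ) → (Fin M → ℝ) → (Fin M → ℝ))
    (hdg : ∀ u v w : Fin M → ℝ, Ht v w - Ht u v = (1/2) * ((w - u) ⬝ᵥ dg u v w))
    (u : ℕ → Fin M → ℝ)
    (hscheme : ∀ n : ℕ, (1/(2*Δt)) • (u (n+2) - u n)
      = S.mulVec (dg (u n) (u (n+1)) (u (n+2)))) :
    ∀ n : ℕ, Ht (u n) (u (n+1)) = Ht (u 0) (u 1) := by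
  have key : ∀ n : ℕ, Ht (u (n+1)) (u (n+2)) = Ht (u n) (u (n+1)) := by
    intro n
    set d := dg (u n) (u (n+1)) (u (n+2)) with hd
    have hdiff : u (n+2) - u n = (2*Δt) • S.mulVec d := by
      have := hscheme n
      have h2 : (2*Δt) • ((1/(2*Δt)) • (u (n+2) - u n)) = (2*Δt) • S.mulVec d := by
        rw [this]
      rwa [smul_smul, mul_one_div, div_self (by positivity), one_smul] at h2
    have hdot : (u (n+2) - u n) ⬝ᵥ d = 0 := by
      rw [hdiff, smul_dotProduct, dotProduct_comm, skew_quad S hS, smul_zero]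
    have := hdg (u n) (u (n+1)) (u (n+2))
    rw [← hd, hdot] at this
    linarith
  intro n
  induction n with
  | zero => rfl
  | succ k ih => rw [key k]; exact ih
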